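/- Let r ≥ 1 be an integer and g ∈ {0,1}, and define A_{r,g}(z) = Σ_{m=0}^{r} C(r−g+1/4, m)·C(2r−g−m, r−g)·(−z)^m, where C(α, m) = α(α−1)⋯(α−m+1)/m! is the generalized binomial coefficient and C(n, k) the ordinary one. Then for all complex numbers z with |1 − z| ≤ 1, one has |A_{r,g}(z)| ≤ C(2r−g, r). -/

import Mathlib

open Finset

/-- The generalized binomial coefficient `C(α, m) = α(α-1)⋯(α-m+1)/m!`. -/
noncomputable def gchoose (α : ℝ) (m : ℕ) : ℝ :=
  (∏ i ∈ Finset.range m, (α - i)) / (m.factorial : ℝ)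

/-- The Padé approximation polynomial `A_{r,g}(z)`. -/
noncomputable def padeA (r g : ℕ) (z : ℂ) : ℂ :=
  ∑ m ∈ Finset.range (r + 1),
    ((gchoose ((r:ℝ) - (g:ℝ) + 1/4) m * ((2*r - g - m).choose (r - g) : ℝ) : ℝ) : ℂ)
      * (-z)^m

lemma descPochhammer_smeval_real (α : ℝ) (m : ℕ) :
    (descPochhammer ℤ m).smeval α = ∏ i ∈ Finset.range m, (α - i) := by
  induction m with
  | zero => simp [descPochhammer_zero, Polynomial.smeval_one]
  | succ n ih =>
    rw [descPochhammer_succ_right, Polynomial.smeval_mul, ih, Finset.prod_range_succ,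
      Polynomial.smeval_sub, Polynomial.smeval_X, Polynomial.smeval_natCast]
    simp

lemma gchoose_eq_ringChoose (α : ℝ) (m : ℕ) : gchoose α m = Ring.choose α m := by
  have h := Ring.descPochhammer_eq_factorial_smul_choose (R := ℝ) α m
  rw [descPochhammer_smeval_real] at h
  rw [gchoose, h, nsmul_eq_mul]
  field_simp

lemma gchoose_natCast (n k : ℕ) : gchoose (n : ℝ) k = (n.choose k : ℝ) := by
  rw [gchoose_eq_ringChoose, Ring.choose_natCast]

/-- Generalized Vandermonde identity over ℝ. -/
lemma gchoose_vandermonde (x y : ℝ) (n : ℕ) :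
    ∑ i ∈ Finset.range (n + 1), gchoose x i * gchoose y (n - i) = gchoose (x + y) n := by
  simp only [gchoose_eq_ringChoose]
  rw [Ring.add_choose_eq n (Commute.all x y),
    Finset.Nat.sum_antidiagonal_eq_sum_range_succ_mk]

/-- Trinomial revision. -/
lemma gchoose_trinomial (α : ℝ) (m j : ℕ) (h : m ≤ j) :
    gchoose α j * (j.choose m : ℝ) = gchoose α m * gchoose (α - m) (j - m) := by
  obtain ⟨i, rfl⟩ := Nat.exists_eq_add_of_le h
  have hsplit : ∏ k ∈ Finset.range (m + i), (α - k)
      = (∏ k ∈ Finset.range m, (α - k)) * ∏ k ∈ Finset.range i, (α - m - k) := by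
    rw [Finset.prod_range_add]
    congr 1
    refine Finset.prod_congr rfl fun k _ => ?_
    push_cast
    ring
  rw [gchoose, gchoose, gchoose, Nat.add_sub_cancel_left, hsplit,
    Nat.cast_choose ℝ (by omega : m ≤ m + i), Nat.add_sub_cancel_left]
  have h1 : (m.factorial : ℝ) ≠ 0 := Nat.cast_ne_zero.2 m.factorial_ne_zero
  have h2 : (i.factorial : ℝ) ≠ 0 := Nat.cast_ne_zero.2 i.factorial_ne_zero
  have h3 : ((m + i).factorial : ℝ) ≠ 0 := Nat.cast_ne_zero.2 (m + i).factorial_ne_zero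
  field_simp
  try ring

/-- The key coefficient identity. -/
lemma coeff_identity (r g m : ℕ) (hg : g ≤ 1) (hr : 1 ≤ r) (hm : m ≤ r) :
    ∑ j ∈ Finset.range (r + 1),
      gchoose ((r:ℝ) - g + 1/4) j * gchoose ((r:ℝ) - 1/4) (r - j) * (j.choose m : ℝ)
    = gchoose ((r:ℝ) - g + 1/4) m * ((2*r - g - m).choose (r - g) : ℝ) := by
  set α : ℝ := (r:ℝ) - g + 1/4 with hα
  have hgr : g ≤ r := le_trans hg hr
  -- restrict sum to j ∈ [m, r]
  have hrestrict : ∑ j ∈ Finset.range (r + 1),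
      gchoose α j * gchoose ((r:ℝ) - 1/4) (r - j) * (j.choose m : ℝ)
      = ∑ j ∈ Finset.Ico m (r + 1),
      gchoose α j * gchoose ((r:ℝ) - 1/4) (r - j) * (j.choose m : ℝ) := by
    rw [Finset.range_eq_Ico]
    refine (Finset.sum_subset (Finset.Ico_subset_Ico (Nat.zero_le m) le_rfl)
      fun j hj hj2 => ?_).symm
    have : j < m := by
      simp only [Finset.mem_Ico] at hj hj2; omega
    rw [Nat.choose_eq_zero_of_lt this]
    simp
  rw [hrestrict, Finset.sum_Ico_eq_sum_range]
  have hrm : r + 1 - m = (r - m) + 1 := by omega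
  rw [hrm]
  have hterm : ∀ i ∈ Finset.range ((r - m) + 1),
      gchoose α (m + i) * gchoose ((r:ℝ) - 1/4) (r - (m + i)) * ((m + i).choose m : ℝ)
      = gchoose α m * (gchoose (α - m) i * gchoose ((r:ℝ) - 1/4) ((r - m) - i)) := by
    intro i hi
    have h1 : gchoose α (m + i) * ((m + i).choose m : ℝ)
        = gchoose α m * gchoose (α - m) ((m + i) - m) :=
      gchoose_trinomial α m (m + i) (by omega)
    rw [Nat.add_sub_cancel_left] at h1
    have h2 : r - (m + i) = (r - m) - i := by omega
    rw [h2]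
    calc gchoose α (m + i) * gchoose ((r:ℝ) - 1/4) ((r-m) - i) * ((m + i).choose m : ℝ)
        = (gchoose α (m + i) * ((m + i).choose m : ℝ)) * gchoose ((r:ℝ) - 1/4) ((r-m) - i) := by
          ring
      _ = gchoose α m * (gchoose (α - m) i * gchoose ((r:ℝ) - 1/4) ((r-m) - i)) := by
          rw [h1]; ring
  rw [Finset.sum_congr rfl hterm, ← Finset.mul_sum, gchoose_vandermonde]
  congr 1
  have hsum : (α - m) + ((r:ℝ) - 1/4) = ((2*r - g - m : ℕ) : ℝ) := by
    have h : (2*r - g - m) + (g + m) = 2*r := by omega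
    have h2 := congrArg (Nat.cast : ℕ → ℝ) h
    push_cast at h2
    rw [hα]
    linarith
  rw [hsum, gchoose_natCast]
  congr 1
  have : (2*r - g - m) - (r - g) = r - m := by omega
  rw [← this, Nat.choose_symm (by omega)]

/-- Expansion of `padeA` in powers of `1 - z` with nonnegative coefficients. -/
lemma padeA_eq_sum (r g : ℕ) (hg : g ≤ 1) (hr : 1 ≤ r) (z : ℂ) :
    padeA r g z = ∑ j ∈ Finset.range (r + 1),
      ((gchoose ((r:ℝ) - g + 1/4) j * gchoose ((r:ℝ) - 1/4) (r - j) : ℝ) : ℂ) * (1 - z)^j := by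
  have hbinom : ∀ j ∈ Finset.range (r + 1),
      ((gchoose ((r:ℝ) - g + 1/4) j * gchoose ((r:ℝ) - 1/4) (r - j) : ℝ) : ℂ) * (1 - z)^j
      = ∑ m ∈ Finset.range (r + 1),
        ((gchoose ((r:ℝ) - g + 1/4) j * gchoose ((r:ℝ) - 1/4) (r - j) : ℝ) : ℂ)
          * ((j.choose m : ℂ) * (-z)^m) := by
    intro j hj
    simp only [Finset.mem_range] at hj
    rw [show (1 : ℂ) - z = (-z) + 1 by ring, add_pow]
    simp only [one_pow, mul_one]
    rw [Finset.mul_sum]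
    rw [Finset.sum_subset (Finset.range_subset_range.2 (by omega : j + 1 ≤ r + 1))
      (fun m _ hm2 => by
        have : j < m := by simp only [Finset.mem_range, not_lt] at hm2; omega
        rw [Nat.choose_eq_zero_of_lt this]; simp)]
    exact Finset.sum_congr rfl fun m _ => by ring
  rw [Finset.sum_congr rfl hbinom, Finset.sum_comm]
  unfold padeA
  refine Finset.sum_congr rfl fun m hm => ?_
  simp only [Finset.mem_range] at hm
  have key := coeff_identity r g m hg hr (by omega)
  symm
  calc ∑ j ∈ Finset.range (r + 1),
        ((gchoose ((r:ℝ) - g + 1/4) j * gchoose ((r:ℝ) - 1/4) (r - j) : ℝ) : ℂ)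
          * ((j.choose m : ℂ) * (-z)^m)
      = (((∑ j ∈ Finset.range (r + 1),
          gchoose ((r:ℝ) - g + 1/4) j * gchoose ((r:ℝ) - 1/4) (r - j) * (j.choose m : ℝ)) : ℝ) : ℂ)
            * (-z)^m := by
        push_cast
        rw [Finset.sum_mul]
        exact Finset.sum_congr rfl fun j _ => by ring
    _ = ((gchoose ((r:ℝ) - g + 1/4) m * ((2*r - g - m).choose (r - g) : ℝ) : ℝ) : ℂ)
          * (-z)^m := by rw [key]

/-- Nonnegativity of the coefficients. -/
lemma coeff_nonneg (r g j : ℕ) (hg : g ≤ 1) (hr : 1 ≤ r) (hj : j ≤ r) :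
    0 ≤ gchoose ((r:ℝ) - g + 1/4) j * gchoose ((r:ℝ) - 1/4) (r - j) := by
  have hgR : (g : ℝ) ≤ 1 := by exact_mod_cast hg
  have h1 : 0 ≤ gchoose ((r:ℝ) - g + 1/4) j := by
    rw [gchoose]
    apply div_nonneg _ (by positivity)
    apply Finset.prod_nonneg
    intro i hi
    simp only [Finset.mem_range] at hi
    have h : i + 1 ≤ r := by omega
    have hR : (i : ℝ) + 1 ≤ (r : ℝ) := by exact_mod_cast h
    linarith
  have h2 : 0 ≤ gchoose ((r:ℝ) - 1/4) (r - j) := by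
    rw [gchoose]
    apply div_nonneg _ (by positivity)
    apply Finset.prod_nonneg
    intro i hi
    simp only [Finset.mem_range] at hi
    have h : i + 1 ≤ r := by omega
    have hR : (i : ℝ) + 1 ≤ (r : ℝ) := by exact_mod_cast h
    linarith
  exact mul_nonneg h1 h2

/-- Lemma 2.2 (ii): for `|1 - z| ≤ 1`, one has `|A_{r,g}(z)| ≤ C(2r-g, r)`. -/
theorem padeA_bound
    (r g : ℕ) (hr : 1 ≤ r) (hg : g = 0 ∨ g = 1)
    (z : ℂ) (hz : ‖1 - z‖ ≤ 1) :
    ‖padeA r g z‖ ≤ ((2*r - g).choose r : ℝ) := by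
  have hg1 : g ≤ 1 := by rcases hg with h | h <;> omega
  rw [padeA_eq_sum r g hg1 hr z]
  calc ‖∑ j ∈ Finset.range (r + 1),
        ((gchoose ((r:ℝ) - g + 1/4) j * gchoose ((r:ℝ) - 1/4) (r - j) : ℝ) : ℂ) * (1 - z)^j‖
      ≤ ∑ j ∈ Finset.range (r + 1), ‖
        (((gchoose ((r:ℝ) - g + 1/4) j * gchoose ((r:ℝ) - 1/4) (r - j) : ℝ) : ℂ) * (1 - z)^j)‖ :=
        norm_sum_le _ _
    _ ≤ ∑ j ∈ Finset.range (r + 1),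
        gchoose ((r:ℝ) - g + 1/4) j * gchoose ((r:ℝ) - 1/4) (r - j) := by
        refine Finset.sum_le_sum fun j hj => ?_
        simp only [Finset.mem_range] at hj
        have hnn := coeff_nonneg r g j hg1 hr (by omega)
        rw [norm_mul, Complex.norm_real, Real.norm_of_nonneg hnn, norm_pow]
        have h1 : ‖1 - z‖ ^ j ≤ 1 := pow_le_one₀ (by positivity) hz
        calc (gchoose ((r:ℝ) - g + 1/4) j * gchoose ((r:ℝ) - 1/4) (r - j))
              * ‖1 - z‖ ^ j
            ≤ (gchoose ((r:ℝ) - g + 1/4) j * gchoose ((r:ℝ) - 1/4) (r - j)) * 1 :=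
              mul_le_mul_of_nonneg_left h1 hnn
          _ = _ := mul_one _
    _ = ((2*r - g).choose r : ℝ) := by
        have key := coeff_identity r g 0 hg1 hr (Nat.zero_le r)
        simp only [Nat.choose_zero_right, Nat.cast_one, mul_one, Nat.sub_zero] at key
        rw [key, gchoose, Finset.range_zero, Finset.prod_empty, Nat.factorial_zero]
        simp only [Nat.cast_one, div_one, one_mul]
        congr 1
        have : (2*r - g) - r = r - g := by omega
        rw [← this, Nat.choose_symm (by omega)]
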